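/- Let f = expr(v) · (⋃_{b∈B} expr(b))* be an unambiguous linear expression (B independent). Then every linear expression e = expr(u) · (⋃_{a∈A} expr(a))* such that the additive submonoid of ℕ^Σ generated by A is contained in the additive submonoid generated by B admits a decomposition: there exist expressions x and y with e ≡ x ∪ y, ⟦x⟧ ⊆ ⟦f⟧, and ⟦y⟧ ⊆ ⟦e⟧ \ ⟦f⟧. -/

import Mathlib

namespace CKAnote
set_option linter.unusedSectionVars false

/-- Commutative regular expressions over an alphabet `α`. -/
inductive CRE (α : Type) where
  | zero : CRE α
  | one : CRE α
  | letter : α → CRE α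
  | mul : CRE α → CRE α → CRE α
  | union : CRE α → CRE α → CRE α
  | star : CRE α → CRE α

variable {α : Type} [Fintype α] [DecidableEq α]

/-- Semantics of a commutative regular expression as a set of Parikh vectors. -/
def sem : CRE α → Set (α → ℕ)
  | .zero => ∅
  | .one => {0}
  | .letter a => {Pi.single a 1}
  | .mul e f => {w | ∃ u ∈ sem e, ∃ v ∈ sem f, w = u + v}
  | .union e f => sem e ∪ sem f
  | .star e => ↑(AddSubmonoid.closure (sem e))

/-- Provable equality: the smallest congruence containing the axioms of
commutative Kleene algebra (where `e ≤ f` abbreviates `e ∪ f ≡ f`). -/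
inductive CKA : CRE α → CRE α → Prop
  | refl (e : CRE α) : CKA e e
  | symm {e f : CRE α} : CKA e f → CKA f e
  | trans {e f g : CRE α} : CKA e f → CKA f g → CKA e g
  | mul_congr {e e' f f' : CRE α} : CKA e e' → CKA f f' → CKA (e.mul f) (e'.mul f')
  | union_congr {e e' f f' : CRE α} : CKA e e' → CKA f f' → CKA (e.union f) (e'.union f')
  | star_congr {e e' : CRE α} : CKA e e' → CKA e.star e'.star
  | mul_assoc (e f g : CRE α) : CKA (e.mul (f.mul g)) ((e.mul f).mul g)
  | mul_comm (e f : CRE α) : CKA (e.mul f) (f.mul e)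
  | one_mul (e : CRE α) : CKA (CRE.one.mul e) e
  | union_assoc (e f g : CRE α) : CKA (e.union (f.union g)) ((e.union f).union g)
  | union_comm (e f : CRE α) : CKA (e.union f) (f.union e)
  | union_idem (e : CRE α) : CKA (e.union e) e
  | zero_union (e : CRE α) : CKA (CRE.zero.union e) e
  | zero_mul (e : CRE α) : CKA (CRE.zero.mul e) CRE.zero
  | left_distrib (e f g : CRE α) : CKA (e.mul (f.union g)) ((e.mul f).union (e.mul g))
  | star_unfold (e : CRE α) : CKA ((CRE.one.union (e.mul e.star)).union e.star) e.star
  | star_lfp {e f : CRE α} : CKA ((e.mul f).union f) f → CKA ((e.star.mul f).union f) f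

/-- `e ≤ f`, i.e. `e ∪ f ≡ f`. -/
def leq (e f : CRE α) : Prop := CKA (e.union f) f

/-- `e^n`, the `n`-fold product of `e` with itself. -/
def pow (e : CRE α) : ℕ → CRE α
  | 0 => CRE.one
  | n + 1 => e.mul (pow e n)

/-- `e^{<n}`, i.e. `(e ∪ 1)^(n-1)` for `n > 0` and `0` for `n = 0`. -/
def ltPow (e : CRE α) : ℕ → CRE α
  | 0 => CRE.zero
  | n + 1 => pow (e.union CRE.one) n

/-- Finite union of a list of expressions. -/
def unionList : List (CRE α) → CRE α
  | [] => CRE.zero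
  | e :: l => e.union (unionList l)

/-- Finite product of a list of expressions. -/
def prodList : List (CRE α) → CRE α
  | [] => CRE.one
  | e :: l => e.mul (prodList l)

/-- `expr(u)`: the product over `a ∈ α` of `u a` copies of the letter `a`. -/
noncomputable def exprVec (u : α → ℕ) : CRE α :=
  prodList ((Finset.univ : Finset α).toList.map (fun a => pow (CRE.letter a) (u a)))

/-- The union `⋃_{b ∈ B} expr(b)` for a finite set of Parikh vectors `B`. -/
noncomputable def unionVecs (B : Finset (α → ℕ)) : CRE α :=
  unionList (B.toList.map exprVec)

/-- The linear expression `expr(u) · (⋃_{b ∈ B} expr(b))*`. -/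
noncomputable def linExpr (u : α → ℕ) (B : Finset (α → ℕ)) : CRE α :=
  (exprVec u).mul (unionVecs B).star

/-- A finite set of Parikh vectors is independent when every Parikh vector
admits at most one representation as an `ℕ`-linear combination of its elements. -/
def Independent (B : Finset (α → ℕ)) : Prop :=
  ∀ c d : (α → ℕ) → ℕ, (∑ b ∈ B, c b • b) = (∑ b ∈ B, d b • b) → ∀ b ∈ B, c b = d b

/-- The semilinear expression associated to a list of linear data:
the finite union of the corresponding linear expressions. -/
noncomputable def semiLin (L : List ((α → ℕ) × Finset (α → ℕ))) : CRE α :=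
  unionList (L.map (fun p => linExpr p.1 p.2))

/-- The dimension of a semilinear expression: the maximum of the dimensions
of its linear components. -/
def dimSL (L : List ((α → ℕ) × Finset (α → ℕ))) : ℕ :=
  (L.map (fun p => p.2.card)).foldr max 0

/-- Finitary (star-free) expressions. -/
def NoStar : CRE α → Prop
  | .zero => True
  | .one => True
  | .letter _ => True
  | .mul e f => NoStar e ∧ NoStar f
  | .union e f => NoStar e ∧ NoStar f
  | .star _ => False

/-- Coordinatewise embedding of `ℕ^α` into `ℚ^α`. -/
def toQ (v : α → ℕ) : α → ℚ := fun a => (v a : ℚ)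

/-! ### Auxiliary lemmas: order theory of `CKA` -/

section AuxCKA

theorem cka_mul_one (e : CRE α) : CKA (e.mul .one) e :=
  (CKA.mul_comm e .one).trans (CKA.one_mul e)

theorem cka_mul_zero (e : CRE α) : CKA (e.mul .zero) .zero :=
  (CKA.mul_comm e .zero).trans (CKA.zero_mul e)

theorem leq_refl (e : CRE α) : leq e e := CKA.union_idem e

theorem leq_of_cka {e f : CRE α} (h : CKA e f) : leq e f :=
  (CKA.union_congr h (CKA.refl f)).trans (CKA.union_idem f)

theorem cka_of_leq {e f : CRE α} (h1 : leq e f) (h2 : leq f e) : CKA e f :=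
  (h2.symm.trans (CKA.union_comm f e)).trans h1

theorem leq_trans {e f g : CRE α} (h1 : leq e f) (h2 : leq f g) : leq e g :=
  ((CKA.union_congr (CKA.refl e) h2.symm).trans
    ((CKA.union_assoc e f g).trans (CKA.union_congr h1 (CKA.refl g)))).trans h2

theorem leq_congr {e e' f f' : CRE α} (he : CKA e e') (hf : CKA f f') (h : leq e f) :
    leq e' f' :=
  ((CKA.union_congr he.symm hf.symm).trans h).trans hf

theorem leq_union_left (e f : CRE α) : leq e (e.union f) :=
  (CKA.union_assoc e e f).trans (CKA.union_congr (CKA.union_idem e) (CKA.refl f))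

theorem leq_union_right (e f : CRE α) : leq f (e.union f) :=
  leq_congr (CKA.refl f) (CKA.union_comm f e) (leq_union_left f e)

theorem union_leq {e f g : CRE α} (h1 : leq e g) (h2 : leq f g) : leq (e.union f) g :=
  ((CKA.union_assoc e f g).symm.trans (CKA.union_congr (CKA.refl e) h2)).trans h1

theorem leq_zero (e : CRE α) : leq .zero e := CKA.zero_union e

theorem mul_leq_left (e : CRE α) {f f' : CRE α} (h : leq f f') : leq (e.mul f) (e.mul f') :=
  (CKA.left_distrib e f f').symm.trans (CKA.mul_congr (CKA.refl e) h)

theorem mul_leq_right {e e' : CRE α} (h : leq e e') (f : CRE α) : leq (e.mul f) (e'.mul f) :=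
  leq_congr (CKA.mul_comm f e) (CKA.mul_comm f e') (mul_leq_left f h)

theorem mul_mono {e e' f f' : CRE α} (h1 : leq e e') (h2 : leq f f') :
    leq (e.mul f) (e'.mul f') :=
  leq_trans (mul_leq_right h1 f) (mul_leq_left e' h2)

theorem one_leq_star (e : CRE α) : leq .one e.star :=
  leq_trans (leq_union_left _ _) (CKA.star_unfold e)

theorem mul_star_leq (e : CRE α) : leq (e.mul e.star) e.star :=
  leq_trans (leq_union_right _ _) (CKA.star_unfold e)

theorem self_leq_star (e : CRE α) : leq e e.star :=
  leq_congr (cka_mul_one e) (CKA.refl _)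
    (leq_trans (mul_leq_left e (one_leq_star e)) (mul_star_leq e))

theorem star_mul_star (e : CRE α) : leq (e.star.mul e.star) e.star :=
  CKA.star_lfp (mul_star_leq e)

theorem star_leq {e g : CRE α} (h1 : leq .one g) (hg : leq (g.mul g) g) (h : leq e g) :
    leq e.star g := by
  have h2 : leq (e.mul g) g := leq_trans (mul_leq_right h g) hg
  have h3 : leq (e.star.mul g) g := CKA.star_lfp h2
  exact leq_congr (cka_mul_one e.star) (CKA.refl g)
    (leq_trans (mul_leq_left e.star h1) h3)

theorem star_mono {e f : CRE α} (h : leq e f) : leq e.star f.star :=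
  star_leq (one_leq_star f) (star_mul_star f) (leq_trans h (self_leq_star f))

theorem pow_leq_star (s : CRE α) : ∀ n, leq (pow s n) s.star
  | 0 => one_leq_star s
  | n + 1 => leq_trans (mul_leq_left s (pow_leq_star s n)) (mul_star_leq s)

theorem star_unfold_eq (e : CRE α) : CKA e.star (CRE.one.union (e.mul e.star)) := by
  refine cka_of_leq ?_ (CKA.star_unfold e)
  have hA : leq (e.mul .one) (CRE.one.union (e.mul e.star)) :=
    leq_congr (cka_mul_one e).symm (CKA.refl _)
      (leq_trans
        (leq_congr (cka_mul_one e) (CKA.refl _) (mul_leq_left e (one_leq_star e)))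
        (leq_union_right _ _))
  have hB : leq (e.mul (e.mul e.star)) (CRE.one.union (e.mul e.star)) :=
    leq_trans (mul_leq_left e (mul_star_leq e)) (leq_union_right _ _)
  have hg : leq (e.mul (CRE.one.union (e.mul e.star))) (CRE.one.union (e.mul e.star)) :=
    leq_congr (CKA.left_distrib e _ _).symm (CKA.refl _) (union_leq hA hB)
  have h3 := CKA.star_lfp hg
  exact leq_congr (cka_mul_one e.star) (CKA.refl _)
    (leq_trans (mul_leq_left e.star (leq_union_left _ _)) h3)

theorem mul_left_comm' (a b c : CRE α) : CKA (a.mul (b.mul c)) (b.mul (a.mul c)) :=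
  ((CKA.mul_assoc a b c).trans
    (CKA.mul_congr (CKA.mul_comm a b) (CKA.refl c))).trans (CKA.mul_assoc b a c).symm

theorem star_union_eq (e f : CRE α) : CKA (e.union f).star (e.star.mul f.star) := by
  refine cka_of_leq ?_ ?_
  · refine star_leq ?_ ?_ ?_
    · exact leq_congr (CKA.one_mul .one) (CKA.refl _)
        (mul_mono (one_leq_star e) (one_leq_star f))
    · have step : CKA ((e.star.mul f.star).mul (e.star.mul f.star))
          ((e.star.mul e.star).mul (f.star.mul f.star)) :=
        ((CKA.mul_assoc _ _ _).symm.trans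
          (CKA.mul_congr (CKA.refl e.star) (mul_left_comm' f.star e.star f.star))).trans
          (CKA.mul_assoc _ _ _)
      exact leq_congr step.symm (CKA.refl _) (mul_mono (star_mul_star e) (star_mul_star f))
    · refine union_leq ?_ ?_
      · exact leq_trans (self_leq_star e)
          (leq_congr (cka_mul_one e.star) (CKA.refl _)
            (mul_leq_left e.star (one_leq_star f)))
      · exact leq_trans (self_leq_star f)
          (leq_congr (CKA.one_mul f.star) (CKA.refl _)
            (mul_leq_right (one_leq_star e) f.star))
  · exact leq_trans
      (mul_mono (star_mono (leq_union_left e f)) (star_mono (leq_union_right e f)))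
      (star_mul_star _)

theorem leq_unionList {g : CRE α} : ∀ {ts : List (CRE α)}, g ∈ ts → leq g (unionList ts)
  | t :: ts, h => by
    rcases List.mem_cons.mp h with h | h
    · subst h; exact leq_union_left _ _
    · exact leq_trans (leq_unionList h) (leq_union_right _ _)

theorem unionList_leq {h : CRE α} : ∀ {ts : List (CRE α)},
    (∀ g ∈ ts, leq g h) → leq (unionList ts) h
  | [], _ => leq_zero h
  | t :: ts, H =>
    union_leq (H t (List.mem_cons_self (a := t) (l := ts)))
      (unionList_leq fun g hg => H g (List.mem_cons_of_mem t hg))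

theorem mul_unionList (g : CRE α) : ∀ (ts : List (CRE α)),
    CKA (g.mul (unionList ts)) (unionList (ts.map (fun t => g.mul t)))
  | [] => cka_mul_zero g
  | t :: ts => (CKA.left_distrib g t _).trans (CKA.union_congr (CKA.refl _) (mul_unionList g ts))

theorem prodList_congr : ∀ {l l' : List (CRE α)}, List.Forall₂ CKA l l' →
    CKA (prodList l) (prodList l')
  | _, _, List.Forall₂.nil => CKA.refl _
  | _, _, List.Forall₂.cons h hs => CKA.mul_congr h (prodList_congr hs)

theorem prodList_leq_mono : ∀ {l l' : List (CRE α)}, List.Forall₂ leq l l' →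
    leq (prodList l) (prodList l')
  | _, _, List.Forall₂.nil => leq_refl _
  | _, _, List.Forall₂.cons h hs => mul_mono h (prodList_leq_mono hs)

theorem forall₂_cka_map {β : Type*} (f g : β → CRE α) {l : List β}
    (h : ∀ b ∈ l, CKA (f b) (g b)) : List.Forall₂ CKA (l.map f) (l.map g) := by
  induction l with
  | nil => simp
  | cons b l ih =>
    simp only [List.map_cons]
    exact List.Forall₂.cons (h b (List.mem_cons_self (a := b) (l := l)))
      (ih fun b hb => h b (List.mem_cons_of_mem _ hb))

theorem forall₂_leq_of_mem : ∀ {cs : List (CRE α)} {L : List (List (CRE α))},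
    List.Forall₂ (· ∈ ·) cs L → List.Forall₂ leq cs (L.map unionList)
  | _, _, List.Forall₂.nil => List.Forall₂.nil
  | _, _, List.Forall₂.cons h hs => List.Forall₂.cons (leq_unionList h) (forall₂_leq_of_mem hs)

theorem prod_sections (L : List (List (CRE α))) :
    CKA (prodList (L.map unionList)) (unionList (L.sections.map prodList)) := by
  refine cka_of_leq ?_ ?_
  · induction L with
    | nil =>
      refine leq_unionList (List.mem_map.mpr ⟨[], ?_, rfl⟩)
      exact List.mem_sections.mpr List.Forall₂.nil
    | cons x L ih =>
      have step1 : leq (prodList ((x :: L).map unionList))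
          ((unionList x).mul (unionList (L.sections.map prodList))) :=
        mul_leq_left _ ih
      refine leq_trans step1 ?_
      refine leq_trans (leq_of_cka (mul_unionList (unionList x) _)) ?_
      refine unionList_leq fun h hh => ?_
      obtain ⟨h', hh', rfl⟩ := List.mem_map.mp hh
      obtain ⟨cs, hcs, rfl⟩ := List.mem_map.mp hh'
      refine leq_trans (leq_of_cka (CKA.mul_comm _ _)) ?_
      refine leq_trans (leq_of_cka (mul_unionList (prodList cs) x)) ?_
      refine unionList_leq fun h2 hh2 => ?_
      obtain ⟨xi, hxi, rfl⟩ := List.mem_map.mp hh2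
      have hmem : (xi :: cs) ∈ (x :: L).sections :=
        List.mem_sections.mpr (List.Forall₂.cons hxi (List.mem_sections.mp hcs))
      refine leq_trans (leq_of_cka (CKA.mul_comm _ _)) ?_
      exact leq_unionList (List.mem_map.mpr ⟨xi :: cs, hmem, rfl⟩)
  · refine unionList_leq fun g hg => ?_
    obtain ⟨cs, hcs, rfl⟩ := List.mem_map.mp hg
    exact prodList_leq_mono (forall₂_leq_of_mem (List.mem_sections.mp hcs))

theorem star_split_eq (s : CRE α) (N : ℕ) : CKA s.star
    (unionList ((List.range (N+1)).map
      (fun i => if i < N then pow s i else (pow s N).mul s.star))) := by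
  refine cka_of_leq ?_ ?_
  · induction N with
    | zero =>
      have hm : (pow s 0).mul s.star ∈
          (List.range 1).map (fun i => if i < 0 then pow s i else (pow s 0).mul s.star) := by
        simp
      refine leq_trans (leq_of_cka ?_) (leq_unionList hm)
      exact (CKA.one_mul s.star).symm
    | succ N ih =>
      refine leq_trans ih (unionList_leq fun g hg => ?_)
      obtain ⟨i, hi, rfl⟩ := List.mem_map.mp hg
      have hiN : i < N + 1 := List.mem_range.mp hi
      by_cases h : i < N
      · rw [if_pos h]
        have hm : (if i < N + 1 then pow s i else (pow s (N+1)).mul s.star) ∈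
            (List.range (N+2)).map
              (fun i => if i < N + 1 then pow s i else (pow s (N+1)).mul s.star) :=
          List.mem_map.mpr ⟨i, List.mem_range.mpr (by omega), rfl⟩
        rw [if_pos (by omega : i < N + 1)] at hm
        exact leq_unionList hm
      · rw [if_neg h]
        have hieq : i = N := by omega
        subst hieq
        have chain : CKA ((pow s i).mul s.star)
            ((pow s i).union ((pow s (i+1)).mul s.star)) := by
          refine (CKA.mul_congr (CKA.refl _) (star_unfold_eq s)).trans ?_
          refine (CKA.left_distrib _ _ _).trans ?_
          refine CKA.union_congr (cka_mul_one _) ?_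
          exact (mul_left_comm' (pow s i) s s.star).trans (CKA.mul_assoc s (pow s i) s.star)
        refine leq_trans (leq_of_cka chain) (union_leq ?_ ?_)
        · have hm : (if i < i + 1 then pow s i else (pow s (i+1)).mul s.star) ∈
              (List.range (i+2)).map
                (fun j => if j < i + 1 then pow s j else (pow s (i+1)).mul s.star) :=
            List.mem_map.mpr ⟨i, List.mem_range.mpr (by omega), rfl⟩
          rw [if_pos (by omega : i < i + 1)] at hm
          exact leq_unionList hm
        · have hm : (if i + 1 < i + 1 then pow s (i+1) else (pow s (i+1)).mul s.star) ∈
              (List.range (i+2)).map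
                (fun j => if j < i + 1 then pow s j else (pow s (i+1)).mul s.star) :=
            List.mem_map.mpr ⟨i + 1, List.mem_range.mpr (by omega), rfl⟩
          rw [if_neg (by omega : ¬ i + 1 < i + 1)] at hm
          exact leq_unionList hm
  · refine unionList_leq fun g hg => ?_
    obtain ⟨i, _, rfl⟩ := List.mem_map.mp hg
    by_cases h : i < N
    · rw [if_pos h]; exact pow_leq_star s i
    · rw [if_neg h]
      exact leq_trans (mul_leq_right (pow_leq_star s N) s.star) (star_mul_star s)

theorem starUnionList : ∀ (l : List (CRE α)),
    CKA (unionList l).star (prodList (l.map (fun e => e.star)))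
  | [] => cka_of_leq
      (star_leq (leq_refl .one) (leq_of_cka (CKA.one_mul .one)) (leq_zero .one))
      (one_leq_star _)
  | e :: l => (star_union_eq e (unionList l)).trans
      (CKA.mul_congr (CKA.refl _) (starUnionList l))

end AuxCKA

/-! ### Auxiliary lemmas: semantics -/

section AuxSem

theorem sem_unionList {w : α → ℕ} : ∀ {l : List (CRE α)},
    w ∈ sem (unionList l) ↔ ∃ g ∈ l, w ∈ sem g := by
  intro l
  induction l with
  | nil => simp [unionList, sem]
  | cons g l ih =>
    simp only [unionList, sem, Set.mem_union, ih, List.mem_cons]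
    constructor
    · rintro (h | ⟨g', hg', hw⟩)
      · exact ⟨g, Or.inl rfl, h⟩
      · exact ⟨g', Or.inr hg', hw⟩
    · rintro ⟨g', (rfl | hg'), hw⟩
      · exact Or.inl hw
      · exact Or.inr ⟨g', hg', hw⟩

theorem sem_prodList {w : α → ℕ} : ∀ {l : List (CRE α)},
    w ∈ sem (prodList l) ↔
      ∃ ws : List (α → ℕ), List.Forall₂ (fun v g => v ∈ sem g) ws l ∧ w = ws.sum := by
  intro l
  induction l generalizing w with
  | nil =>
    simp only [prodList, sem, Set.mem_singleton_iff]
    constructor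
    · rintro rfl; exact ⟨[], List.Forall₂.nil, rfl⟩
    · rintro ⟨ws, hws, rfl⟩; cases hws; rfl
  | cons g l ih =>
    simp only [prodList, sem, Set.mem_setOf_eq]
    constructor
    · rintro ⟨a, ha, b, hb, rfl⟩
      obtain ⟨ws, hws, rfl⟩ := ih.mp hb
      exact ⟨a :: ws, List.Forall₂.cons ha hws, rfl⟩
    · rintro ⟨ws, hws, rfl⟩
      cases hws with
      | cons ha hws => exact ⟨_, ha, _, ih.mpr ⟨_, hws, rfl⟩, rfl⟩

theorem sem_pow {s : CRE α} {w : α → ℕ} (hs : sem s = {w}) :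
    ∀ n : ℕ, sem (pow s n) = {(n • w : α → ℕ)}
  | 0 => by simp [pow, sem]
  | n + 1 => by
    ext x
    simp only [pow, sem, hs, sem_pow hs n, Set.mem_setOf_eq, Set.mem_singleton_iff]
    have key : w + n • w = (n + 1) • w := (add_comm w (n • w)).trans (succ_nsmul w n).symm
    constructor
    · rintro ⟨a, rfl, b, rfl, rfl⟩
      exact key
    · rintro rfl
      exact ⟨w, rfl, n • w, rfl, key.symm⟩

theorem sem_prodList_singleton : ∀ {l : List (CRE α)} {vs : List (α → ℕ)},
    List.Forall₂ (fun g v => sem g = {v}) l vs → sem (prodList l) = {vs.sum}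
  | _, _, List.Forall₂.nil => by simp [prodList, sem]
  | _, _, List.Forall₂.cons (a := g) (b := v) h hs => by
    ext x
    simp only [prodList, sem, h, sem_prodList_singleton hs, Set.mem_setOf_eq,
      Set.mem_singleton_iff, List.sum_cons]
    constructor
    · rintro ⟨a, rfl, b, rfl, rfl⟩; rfl
    · rintro rfl; exact ⟨_, rfl, _, rfl, rfl⟩

theorem smul_single_eq (a : α) (n : ℕ) : n • (Pi.single a 1 : α → ℕ) = Pi.single a n := by
  funext x
  by_cases h : x = a <;> simp [Pi.single_apply, h]

theorem sem_exprVec (w : α → ℕ) : sem (exprVec w) = {w} := by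
  rw [exprVec]
  have h : List.Forall₂ (fun g v => sem g = {v})
      ((Finset.univ : Finset α).toList.map (fun a => pow (CRE.letter a) (w a)))
      ((Finset.univ : Finset α).toList.map (fun a => Pi.single a (w a))) := by
    rw [List.forall₂_map_left_iff, List.forall₂_map_right_iff]
    refine List.forall₂_same.mpr fun a _ => ?_
    rw [sem_pow (by simp [sem] : sem (CRE.letter a) = {Pi.single a 1}) (w a),
      smul_single_eq]
  rw [sem_prodList_singleton h]
  congr 1
  rw [Finset.sum_map_toList]
  exact Finset.univ_sum_single w

theorem sem_unionVecs (A : Finset (α → ℕ)) : sem (unionVecs A) = (A : Set (α → ℕ)) := by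
  ext w
  rw [unionVecs]
  simp only [sem_unionList, List.mem_map, Finset.mem_coe]
  constructor
  · rintro ⟨g, ⟨a, ha, rfl⟩, hw⟩
    rw [sem_exprVec] at hw
    rw [Set.mem_singleton_iff] at hw
    subst hw
    exact Finset.mem_toList.mp ha
  · intro hw
    exact ⟨exprVec w, ⟨w, Finset.mem_toList.mpr hw, rfl⟩, by rw [sem_exprVec]; rfl⟩

theorem sem_linExpr (u : α → ℕ) (A : Finset (α → ℕ)) :
    sem (linExpr u A) =
      {p | ∃ w ∈ AddSubmonoid.closure (A : Set (α → ℕ)), p = u + w} := by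
  ext p
  rw [linExpr]
  show p ∈ sem ((exprVec u).mul (unionVecs A).star) ↔ _
  simp only [sem, sem_exprVec, sem_unionVecs, Set.mem_setOf_eq, Set.mem_singleton_iff,
    SetLike.mem_coe]
  constructor
  · rintro ⟨a, rfl, b, hb, rfl⟩; exact ⟨b, hb, rfl⟩
  · rintro ⟨w, hw, rfl⟩; exact ⟨u, rfl, w, hw, rfl⟩

end AuxSem

/-! ### Dickson's lemma and coefficient bookkeeping -/

section AuxDickson

/-- Sum `∑ k_j • a_j` over a zipped list of vectors and coefficients. -/
def zsum (ls : List (α → ℕ)) (ks : List ℕ) : α → ℕ :=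
  ((ls.zip ks).map (fun p => p.2 • p.1)).sum

theorem zsum_nil (ks : List ℕ) : zsum ([] : List (α → ℕ)) ks = 0 := by
  simp [zsum]

theorem zsum_cons (a : α → ℕ) (ls : List (α → ℕ)) (k : ℕ) (ks : List ℕ) :
    zsum (a :: ls) (k :: ks) = k • a + zsum ls ks := by
  simp [zsum]

theorem zsum_mem_closure {A : Finset (α → ℕ)} :
    ∀ (ls : List (α → ℕ)) (ks : List ℕ), (∀ a ∈ ls, a ∈ A) →
      zsum ls ks ∈ AddSubmonoid.closure (A : Set (α → ℕ))
  | [], ks, _ => by rw [zsum_nil]; exact zero_mem _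
  | a :: ls, [], _ => by
    have h0 : zsum (a :: ls) [] = 0 := by simp [zsum]
    rw [h0]; exact zero_mem _
  | a :: ls, k :: ks, h => by
    rw [zsum_cons]
    exact add_mem
      (AddSubmonoid.nsmul_mem _ (AddSubmonoid.subset_closure (h a (List.mem_cons_self (a := a) (l := ls)))) k)
      (zsum_mem_closure ls ks fun b hb => h b (List.mem_cons_of_mem a hb))

theorem listToFun (N : ℕ) : ∀ (ls : List (α → ℕ)) (ks : List ℕ), ls.Nodup →
    ks.length = ls.length →
    ∃ c : (α → ℕ) → ℕ,
      zsum ls ks = (ls.map (fun a => c a • a)).sum ∧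
      zsum ls (ks.map (fun k => min k N)) = (ls.map (fun a => min (c a) N • a)).sum
  | [], ks, _, _ => ⟨fun _ => 0, by simp [zsum], by simp [zsum]⟩
  | a :: ls, k :: ks, hnd, hlen => by
    obtain ⟨c', h1, h2⟩ := listToFun N ls ks (List.nodup_cons.mp hnd).2
      (by simpa using hlen)
    have ha : a ∉ ls := (List.nodup_cons.mp hnd).1
    refine ⟨fun b => if b = a then k else c' b, ?_, ?_⟩
    · rw [zsum_cons, List.map_cons, List.sum_cons]
      congr 1
      · simp
      · rw [h1]
        refine congrArg List.sum (List.map_congr_left fun b hb => ?_).symm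
        have hb' : b ≠ a := fun hba => ha (hba ▸ hb)
        simp [hb']
    · rw [List.map_cons, zsum_cons, List.map_cons, List.sum_cons]
      congr 1
      · simp
      · rw [h2]
        refine congrArg List.sum (List.map_congr_left fun b hb => ?_).symm
        have hb' : b ≠ a := fun hba => ha (hba ▸ hb)
        simp [hb']

theorem exists_cap (S : Set ((α → ℕ) → ℕ)) (A : Finset (α → ℕ))
    (hAS : ∀ c c', (∀ a ∈ A, c a = c' a) → (c ∈ S ↔ c' ∈ S))
    (hup : ∀ c d, (∀ a ∈ A, c a ≤ d a) → c ∈ S → d ∈ S) :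
    ∃ N : ℕ, ∀ c, c ∈ S ↔ (fun a => min (c a) N) ∈ S := by
  classical
  set ext : (↥A → ℕ) → ((α → ℕ) → ℕ) :=
    fun c => fun a => if h : a ∈ A then c ⟨a, h⟩ else 0 with hext
  set T : Set (↥A → ℕ) := {c | ext c ∈ S} with hT
  set Min : Set (↥A → ℕ) := {m | m ∈ T ∧ ∀ d ∈ T, d ≤ m → d = m} with hMin
  have coinit : ∀ n (c : ↥A → ℕ), (∑ a, c a) = n → c ∈ T → ∃ m ∈ Min, m ≤ c := by
    intro n
    induction n using Nat.strong_induction_on with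
    | _ n IH =>
      intro c hcn hc
      by_cases hmin : ∀ d ∈ T, d ≤ c → d = c
      · exact ⟨c, ⟨hc, hmin⟩, le_refl c⟩
      · push_neg at hmin
        obtain ⟨d, hd, hdc, hne⟩ := hmin
        have hlt : ∑ a, d a < n := by
          rw [← hcn]
          refine Finset.sum_lt_sum (fun a _ => hdc a) ?_
          by_contra hno
          push_neg at hno
          exact hne (funext fun a => le_antisymm (hdc a) (hno a (Finset.mem_univ a)))
        obtain ⟨m, hm, hmd⟩ := IH _ hlt d rfl hd
        exact ⟨m, hm, le_trans hmd hdc⟩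
  have hfin : Min.Finite := by
    rcases Min.finite_or_infinite with h | h
    · exact h
    · exfalso
      obtain emb := h.natEmbedding
      obtain ⟨m, n, hmn, hle⟩ := Set.PartiallyWellOrderedOn.exists_lt (Set.isPWO_of_wellQuasiOrderedLE Min) (f := fun k => (emb k : ↥A → ℕ)) (fun k => (emb k).2)
      have h1 : ((emb m : ↥A → ℕ)) = (emb n : ↥A → ℕ) :=
        (emb n).2.2 _ (emb m).2.1 hle
      exact absurd (emb.injective (Subtype.ext h1)) (by omega)
  set N : ℕ := hfin.toFinset.sup (fun m => Finset.univ.sup fun a => m a) with hN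
  have hbound : ∀ m ∈ Min, ∀ a : ↥A, m a ≤ N := by
    intro m hm a
    refine le_trans (Finset.le_sup (Finset.mem_univ a)) ?_
    exact Finset.le_sup (f := fun m => Finset.univ.sup fun a => m a) (hfin.mem_toFinset.mpr hm)
  refine ⟨N, fun c => ⟨?_, ?_⟩⟩
  · intro hc
    have hcT : (fun a : ↥A => c a) ∈ T := by
      rw [hT, Set.mem_setOf_eq]
      exact (hAS c _ (fun a ha => by simp [hext, ha])).mp hc
    obtain ⟨m, hm, hmc⟩ := coinit _ _ rfl hcT
    refine hup (ext m) _ (fun a ha => ?_) hm.1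
    rw [hext]
    simp only [dif_pos ha]
    exact le_min (hmc ⟨a, ha⟩) (hbound m hm ⟨a, ha⟩)
  · intro hc
    exact hup _ c (fun a _ => min_le_left _ _) hc

end AuxDickson

/-! ### The building blocks of the decomposition -/

section AuxMain

/-- The piece `expr(a)^i` (for `i < N`) or `expr(a)^N · expr(a)*` (for `i = N`). -/
noncomputable def pickE (N : ℕ) (a : α → ℕ) (i : ℕ) : CRE α :=
  if i < N then pow (exprVec a) i else (pow (exprVec a) N).mul (exprVec a).star

/-- All pieces for a given generator. -/
noncomputable def optsE (N : ℕ) (a : α → ℕ) : List (CRE α) :=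
  (List.range (N+1)).map (pickE N a)

noncomputable def LL (N : ℕ) (A : Finset (α → ℕ)) : List (List (CRE α)) :=
  A.toList.map (optsE N)

/-- All the terms in the expansion of `linExpr u A`. -/
noncomputable def tsE (N : ℕ) (u : α → ℕ) (A : Finset (α → ℕ)) : List (CRE α) :=
  (LL N A).sections.map (fun cs => (exprVec u).mul (prodList cs))

theorem linExpr_eq_ts (u : α → ℕ) (A : Finset (α → ℕ)) (N : ℕ) :
    CKA (linExpr u A) (unionList (tsE N u A)) := by
  have e1 : CKA (unionVecs A).star
      (prodList (A.toList.map (fun a => (exprVec a).star))) := by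
    have h := starUnionList (A.toList.map exprVec)
    rw [List.map_map] at h
    simpa only [Function.comp_def, unionVecs] using h
  have e2 : CKA (prodList (A.toList.map (fun a => (exprVec a).star)))
      (prodList ((LL N A).map unionList)) := by
    rw [LL, List.map_map]
    simp only [Function.comp_def]
    refine prodList_congr (forall₂_cka_map _ _ fun a _ => ?_)
    exact star_split_eq (exprVec a) N
  have e3 := prod_sections (LL N A)
  have e4 : CKA ((exprVec u).mul (unionList ((LL N A).sections.map prodList)))
      (unionList (tsE N u A)) := by
    have h := mul_unionList (exprVec u) ((LL N A).sections.map prodList)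
    rw [List.map_map] at h
    simpa only [Function.comp_def, tsE] using h
  exact (CKA.mul_congr (CKA.refl (exprVec u)) ((e1.trans e2).trans e3)).trans e4

theorem mem_tsE {N : ℕ} {u : α → ℕ} {A : Finset (α → ℕ)} {g : CRE α}
    (hg : g ∈ tsE N u A) :
    ∃ cs, List.Forall₂ (fun c a => ∃ i, i ≤ N ∧
        c = (if i < N then pow (exprVec a) i
             else (pow (exprVec a) N).mul (exprVec a).star)) cs A.toList ∧
      g = (exprVec u).mul (prodList cs) := by
  obtain ⟨cs, hcs, rfl⟩ := List.mem_map.mp hg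
  refine ⟨cs, ?_, rfl⟩
  have h := List.mem_sections.mp hcs
  rw [LL, List.forall₂_map_right_iff] at h
  refine List.Forall₂.imp (fun c a hc => ?_) h
  rw [optsE] at hc
  obtain ⟨i, hi, rfl⟩ := List.mem_map.mp hc
  exact ⟨i, by have := List.mem_range.mp hi; omega, rfl⟩

theorem sem_pick {a : α → ℕ} {N i : ℕ} (hi : i ≤ N) {w : α → ℕ}
    (hw : w ∈ sem (if i < N then pow (exprVec a) i
                   else (pow (exprVec a) N).mul (exprVec a).star)) :
    ∃ k : ℕ, min k N = i ∧ w = k • a := by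
  by_cases h : i < N
  · rw [if_pos h, sem_pow (sem_exprVec a)] at hw
    exact ⟨i, min_eq_left hi, hw⟩
  · rw [if_neg h] at hw
    have hiN : i = N := le_antisymm hi (not_lt.mp h)
    subst hiN
    simp only [sem, Set.mem_setOf_eq] at hw
    obtain ⟨x, hx, y, hy, rfl⟩ := hw
    rw [sem_pow (sem_exprVec a)] at hx
    rw [Set.mem_singleton_iff] at hx
    subst hx
    have hy' : y ∈ AddSubmonoid.closure (sem (exprVec a)) := hy
    rw [sem_exprVec] at hy'
    obtain ⟨n, rfl⟩ := AddSubmonoid.mem_closure_singleton.mp hy'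
    exact ⟨i + n, min_eq_right (Nat.le_add_right i n), (add_nsmul a i n).symm⟩

theorem prod_two_points {N : ℕ} {cs : List (CRE α)} {ls : List (α → ℕ)}
    (h : List.Forall₂ (fun c a => ∃ i, i ≤ N ∧
        c = (if i < N then pow (exprVec a) i
             else (pow (exprVec a) N).mul (exprVec a).star)) cs ls) :
    ∀ w ∈ sem (prodList cs), ∀ w' ∈ sem (prodList cs),
    ∃ ks ks' : List ℕ, ks.length = ls.length ∧ ks'.length = ls.length ∧
      w = zsum ls ks ∧ w' = zsum ls ks' ∧
      ks.map (fun k => min k N) = ks'.map (fun k => min k N) := by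
  induction h with
  | nil =>
    intro w hw w' hw'
    simp only [prodList, sem, Set.mem_singleton_iff] at hw hw'
    subst hw; subst hw'
    exact ⟨[], [], rfl, rfl, (zsum_nil _).symm, (zsum_nil _).symm, rfl⟩
  | @cons c a cs ls hh htail ih =>
    intro w hw w' hw'
    obtain ⟨i, hi, rfl⟩ := hh
    simp only [prodList, sem, Set.mem_setOf_eq] at hw hw'
    obtain ⟨x, hx, r, hr, rfl⟩ := hw
    obtain ⟨x', hx', r', hr', rfl⟩ := hw'
    obtain ⟨k, hk, rfl⟩ := sem_pick hi hx
    obtain ⟨k', hk', rfl⟩ := sem_pick hi hx'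
    obtain ⟨ks, ks', hl, hl', rfl, rfl, hmaps⟩ := ih r hr r' hr'
    exact ⟨k :: ks, k' :: ks', by simp [hl], by simp [hl'],
      (zsum_cons a ls k ks).symm, (zsum_cons a ls k' ks').symm,
      by simp [hk, hk', hmaps]⟩

end AuxMain

/-- Decomposition of compatible linear expressions: if `B` is independent and
the submonoid generated by `A` is contained in the one generated by `B`, then
`e = expr(u)·(⋃_{a∈A} expr(a))*` can be decomposed with respect to
`f = expr(v)·(⋃_{b∈B} expr(b))*`. -/
theorem dec_compatible (v : α → ℕ) (B : Finset (α → ℕ)) (hB : Independent B)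
    (u : α → ℕ) (A : Finset (α → ℕ))
    (hAB : AddSubmonoid.closure (A : Set (α → ℕ)) ≤
           AddSubmonoid.closure (B : Set (α → ℕ))) :
    ∃ x y : CRE α, CKA (linExpr u A) (x.union y) ∧
      sem x ⊆ sem (linExpr v B) ∧
      sem y ⊆ sem (linExpr u A) \ sem (linExpr v B) := by
  classical
  obtain ⟨N, hcap⟩ := exists_cap
    {c : (α → ℕ) → ℕ | u + ∑ a ∈ A, c a • a ∈ sem (linExpr v B)} A
    (fun c c' h => by
      simp only [Set.mem_setOf_eq]
      rw [Finset.sum_congr rfl (fun a ha => by rw [h a ha])])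
    (fun c d h hc => by
      simp only [Set.mem_setOf_eq, sem_linExpr] at hc ⊢
      obtain ⟨w, hw, hcw⟩ := hc
      have hsum : ∑ a ∈ A, d a • a =
          (∑ a ∈ A, c a • a) + ∑ a ∈ A, (d a - c a) • a := by
        rw [← Finset.sum_add_distrib]
        refine Finset.sum_congr rfl fun a ha => ?_
        rw [← add_nsmul]
        congr 1
        have := h a ha
        omega
      refine ⟨w + ∑ a ∈ A, (d a - c a) • a,
        add_mem hw (hAB (AddSubmonoid.sum_mem _ fun a ha =>
          AddSubmonoid.nsmul_mem (S := AddSubmonoid.closure (A : Set (α → ℕ)))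
            (AddSubmonoid.subset_closure (Finset.mem_coe.mpr ha)) _)), ?_⟩
      rw [hsum, ← add_assoc, hcw, add_assoc])
  have hcap' : ∀ c : (α → ℕ) → ℕ,
      (u + ∑ a ∈ A, c a • a ∈ sem (linExpr v B)) ↔
      (u + ∑ a ∈ A, (min (c a) N) • a ∈ sem (linExpr v B)) := fun c => hcap c
  clear hcap
  refine ⟨unionList ((tsE N u A).filter fun g => decide (sem g ⊆ sem (linExpr v B))),
          unionList ((tsE N u A).filter fun g => !decide (sem g ⊆ sem (linExpr v B))),
          ?_, ?_, ?_⟩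
  · refine (linExpr_eq_ts u A N).trans (cka_of_leq ?_ ?_)
    · refine unionList_leq fun g hg => ?_
      by_cases hq : decide (sem g ⊆ sem (linExpr v B)) = true
      · exact leq_trans (leq_unionList (List.mem_filter.mpr ⟨hg, hq⟩)) (leq_union_left _ _)
      · exact leq_trans (leq_unionList (List.mem_filter.mpr ⟨hg, by simp [hq]⟩))
          (leq_union_right _ _)
    · exact union_leq
        (unionList_leq fun g hg => leq_unionList (List.mem_filter.mp hg).1)
        (unionList_leq fun g hg => leq_unionList (List.mem_filter.mp hg).1)
  · intro w hw
    obtain ⟨g, hg, hwg⟩ := sem_unionList.mp hw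
    exact of_decide_eq_true (List.mem_filter.mp hg).2 hwg
  · intro w hw
    obtain ⟨g, hg, hwg⟩ := sem_unionList.mp hw
    obtain ⟨hgts, hqg⟩ := List.mem_filter.mp hg
    have hnsub : ¬ (sem g ⊆ sem (linExpr v B)) := by
      intro hsub
      rw [decide_eq_true hsub] at hqg
      simp at hqg
    obtain ⟨cs, hcs, rfl⟩ := mem_tsE hgts
    simp only [sem, Set.mem_setOf_eq, sem_exprVec, Set.mem_singleton_iff] at hwg
    obtain ⟨x, rfl, r, hr, rfl⟩ := hwg
    obtain ⟨w0, hw0g, hw0F⟩ := Set.not_subset.mp hnsub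
    have hw0g' := hw0g
    simp only [sem, Set.mem_setOf_eq, sem_exprVec, Set.mem_singleton_iff] at hw0g'
    obtain ⟨x0, rfl, r0, hr0, rfl⟩ := hw0g'
    obtain ⟨ks, ks0, hlen, hlen0, rfl, rfl, hmaps⟩ := prod_two_points hcs r hr r0 hr0
    obtain ⟨c, hc1, hc2⟩ := listToFun N A.toList ks (Finset.nodup_toList A) hlen
    obtain ⟨c0, hc01, hc02⟩ := listToFun N A.toList ks0 (Finset.nodup_toList A) hlen0
    have hsumc : zsum A.toList ks = ∑ a ∈ A, c a • a := by
      rw [hc1, Finset.sum_map_toList]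
    have hsumc' : zsum A.toList (ks.map (fun k => min k N)) =
        ∑ a ∈ A, min (c a) N • a := by
      rw [hc2, Finset.sum_map_toList]
    have hsumc0 : zsum A.toList ks0 = ∑ a ∈ A, c0 a • a := by
      rw [hc01, Finset.sum_map_toList]
    have hsumc0' : zsum A.toList (ks0.map (fun k => min k N)) =
        ∑ a ∈ A, min (c0 a) N • a := by
      rw [hc02, Finset.sum_map_toList]
    refine ⟨?_, ?_⟩
    · rw [sem_linExpr]
      exact ⟨zsum A.toList ks,
        zsum_mem_closure _ _ (fun a ha => Finset.mem_toList.mp ha), rfl⟩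
    · intro hwF
      apply hw0F
      rw [hsumc] at hwF
      rw [hsumc0]
      have heq : ∑ a ∈ A, min (c a) N • a = ∑ a ∈ A, min (c0 a) N • a := by
        rw [← hsumc', hmaps, hsumc0']
      have h2 := (hcap' c).mp hwF
      rw [heq] at h2
      exact (hcap' c0).mpr h2

end CKAnote
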